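/- arXiv:math/0511217 — 3 statements merged into one kernel-verified Lean document; each statement's English description precedes it below -/
import Mathlib

section
/- The 4×4 matrix T^μ₁ = ((0,-1,1,-1),(0,1,0,1),(-1,1,-1,1),(-1,-1,0,0)) belongs to Sp(4,ℤ), and the symmetric matrix B₁ = ((-1/2 + i/√2, 1/2),(1/2, -1/2 + i/√2)) satisfies (A B₁ + B)(C B₁ + D)⁻¹ = B₁, where A,B,C,D are the 2×2 blocks of T^μ₁. -/
open Matrix Complex

/-- The standard symplectic form matrix for `Sp(4,ℤ)`. -/
def J4 : Matrix (Fin 4) (Fin 4) ℤ :=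
  !![0, 0, 1, 0; 0, 0, 0, 1; -1, 0, 0, 0; 0, -1, 0, 0]

theorem Burnside_period_matrix_fixed :
    let T : Matrix (Fin 4) (Fin 4) ℤ :=
      !![0, -1, 1, -1; 0, 1, 0, 1; -1, 1, -1, 1; -1, -1, 0, 0]
    let A : Matrix (Fin 2) (Fin 2) ℂ := !![0, -1; 0, 1]
    let B : Matrix (Fin 2) (Fin 2) ℂ := !![1, -1; 0, 1]
    let C : Matrix (Fin 2) (Fin 2) ℂ := !![-1, 1; -1, -1]
    let D : Matrix (Fin 2) (Fin 2) ℂ := !![-1, 1; 0, 0]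
    let B₁ : Matrix (Fin 2) (Fin 2) ℂ :=
      !![-1/2 + Complex.I / (Real.sqrt 2 : ℂ), 1/2;
         1/2, -1/2 + Complex.I / (Real.sqrt 2 : ℂ)]
    Tᵀ * J4 * T = J4 ∧ (A * B₁ + B) * (C * B₁ + D)⁻¹ = B₁ := by
  intro T A B C D B₁
  constructor
  · show Tᵀ * J4 * T = J4
    simp only [T, J4]
    decide
  · have hs : (Complex.I / (Real.sqrt 2 : ℂ)) ^ 2 = -1/2 := by
      have h2 : ((Real.sqrt 2 : ℝ) : ℂ) ^ 2 = 2 := by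
        rw [← Complex.ofReal_pow, Real.sq_sqrt (by norm_num)]
        norm_num
      field_simp [div_pow, Complex.I_sq, h2]
      linear_combination 2 * Complex.I_sq + h2
    have heq : A * B₁ + B = B₁ * (C * B₁ + D) := by
      simp only [A, B, C, D, B₁]
      ext i j
      fin_cases i <;> fin_cases j <;>
        simp [Matrix.mul_apply, Fin.sum_univ_two, Matrix.add_apply] <;>
        first
          | linear_combination hs
          | linear_combination -hs
          | ring
    have hdet : (C * B₁ + D).det = -1 := by
      simp only [C, D, B₁]
      rw [Matrix.det_fin_two]
      simp [Matrix.mul_apply, Fin.sum_univ_two, Matrix.add_apply]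
      linear_combination 2 * hs
    have hU : IsUnit (C * B₁ + D).det := by rw [hdet]; exact isUnit_one.neg
    rw [heq, Matrix.mul_assoc, Matrix.mul_nonsing_inv _ hU, Matrix.mul_one]
end

section
/- The 4×4 matrix T^μ₁ = ((0,0,-1,0),(0,0,-1,-1),(1,-1,0,0),(0,1,0,0)) belongs to Sp(4,ℤ), and the matrix B₂ = (i/√3)·((2,1),(1,2)) satisfies (A B₂ + B)(C B₂ + D)⁻¹ = B₂, where A,B,C,D are the 2×2 blocks of T^μ₁. -/
open Matrix Complex

theorem D6_period_matrix_fixed :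
    let T : Matrix (Fin 4) (Fin 4) ℤ :=
      !![0, 0, -1, 0; 0, 0, -1, -1; 1, -1, 0, 0; 0, 1, 0, 0]
    let A : Matrix (Fin 2) (Fin 2) ℂ := !![0, 0; 0, 0]
    let B : Matrix (Fin 2) (Fin 2) ℂ := !![-1, 0; -1, -1]
    let C : Matrix (Fin 2) (Fin 2) ℂ := !![1, -1; 0, 1]
    let D : Matrix (Fin 2) (Fin 2) ℂ := !![0, 0; 0, 0]
    let B₂ : Matrix (Fin 2) (Fin 2) ℂ :=
      (Complex.I / (Real.sqrt 3 : ℂ)) • !![2, 1; 1, 2]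
    Tᵀ * J4 * T = J4 ∧ (A * B₂ + B) * (C * B₂ + D)⁻¹ = B₂ := by
  intro T A B C D B₂
  have hs : ((Complex.I / (Real.sqrt 3 : ℂ)))^2 = -1/3 := by
    have h3 : ((Real.sqrt 3 : ℂ))^2 = 3 := by
      norm_cast
      rw [Real.sq_sqrt] <;> norm_num
    field_simp [div_pow, h3, Complex.I_sq]
    rw [Complex.I_sq, h3]; ring
  constructor
  · decide
  · have hCBD : C * B₂ + D = (Complex.I / (Real.sqrt 3 : ℂ)) • !![1, -1; 1, 2] := by
      simp only [B₂, C, D, Matrix.mul_smul]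
      ext i j
      fin_cases i <;> fin_cases j <;>
        simp [Matrix.mul_apply, Fin.sum_univ_succ] <;> ring
    have hdet : (C * B₂ + D).det = -1 := by
      rw [hCBD]
      simp [Matrix.det_fin_two, Matrix.smul_apply]
      ring_nf
      rw [show Complex.I^2 * ((Real.sqrt 3 : ℂ))⁻¹^2 = (Complex.I / (Real.sqrt 3 : ℂ))^2 by ring, hs]
      ring
    have : Invertible (C * B₂ + D) := by
      apply Matrix.invertibleOfIsUnitDet
      rw [hdet]; exact IsUnit.of_mul_eq_one (-1) (by norm_num)
    rw [Matrix.mul_inv_eq_iff_eq_mul_of_invertible]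
    rw [hCBD]
    simp only [A, B, B₂, Matrix.smul_mul, Matrix.mul_smul, smul_smul, ← sq, hs]
    ext i j
    fin_cases i <;> fin_cases j <;>
      simp [Matrix.mul_apply, Fin.sum_univ_succ] <;> ring
end

section
/- Let ε₅ = e^{2πi/5} and T^μ = ((-1,1,0,0),(-1,0,1,1),(0,0,0,1),(-1,0,0,0)). Then T^μ ∈ Sp(4,ℤ), and the matrix B₃ = ((ε₅, ε₅/(1+ε₅)),(ε₅/(1+ε₅), 1-ε₅⁴)) is symmetric, has positive-definite imaginary part, and satisfies (A B₃ + B)(C B₃ + D)⁻¹ = B₃ with A,B,C,D the blocks of T^μ. -/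
open Matrix Complex

theorem Z5_period_matrix_fixed :
    let ε₅ : ℂ := Complex.exp (2 * Real.pi * Complex.I / 5)
    let T : Matrix (Fin 4) (Fin 4) ℤ :=
      !![-1, 1, 0, 0; -1, 0, 1, 1; 0, 0, 0, 1; -1, 0, 0, 0]
    let A : Matrix (Fin 2) (Fin 2) ℂ := !![-1, 1; -1, 0]
    let B : Matrix (Fin 2) (Fin 2) ℂ := !![0, 0; 1, 1]
    let C : Matrix (Fin 2) (Fin 2) ℂ := !![0, 0; -1, 0]
    let D : Matrix (Fin 2) (Fin 2) ℂ := !![0, 1; 0, 0]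
    let B₃ : Matrix (Fin 2) (Fin 2) ℂ :=
      !![ε₅, ε₅ / (1 + ε₅); ε₅ / (1 + ε₅), 1 - ε₅ ^ 4]
    Tᵀ * J4 * T = J4 ∧
    B₃ᵀ = B₃ ∧
    (Matrix.of fun i j => (B₃ i j).im : Matrix (Fin 2) (Fin 2) ℝ).PosDef ∧
    (A * B₃ + B) * (C * B₃ + D)⁻¹ = B₃ := by
  intro e T A B C D B₃
  -- basic facts about e
  have hee : e = Complex.exp ((2 * Real.pi / 5 : ℝ) * Complex.I) := by
    show Complex.exp _ = _
    push_cast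
    ring_nf
  have hre : e.re = Real.cos (2 * Real.pi / 5) := by
    rw [hee, Complex.exp_ofReal_mul_I_re]
  have him : e.im = Real.sin (2 * Real.pi / 5) := by
    rw [hee, Complex.exp_ofReal_mul_I_im]
  have hs : 0 < Real.sin (2 * Real.pi / 5) := by
    apply Real.sin_pos_of_pos_of_lt_pi
    · positivity
    · nlinarith [Real.pi_pos]
  have hc : 0 < Real.cos (2 * Real.pi / 5) := by
    apply Real.cos_pos_of_mem_Ioo
    constructor
    · nlinarith [Real.pi_pos]
    · nlinarith [Real.pi_pos]
  have he5 : e ^ 5 = 1 := by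
    show Complex.exp _ ^ 5 = 1
    rw [← Complex.exp_nat_mul]
    rw [show (5 : ℕ) * (2 * (Real.pi : ℂ) * Complex.I / 5) = 2 * Real.pi * Complex.I by ring]
    exact Complex.exp_two_pi_mul_I
  have he1 : e ≠ 1 := by
    intro h
    have : e.im = 0 := by rw [h]; simp
    rw [him] at this; linarith
  have hcyc : 1 + e + e ^ 2 + e ^ 3 + e ^ 4 = 0 := by
    have h : (e - 1) * (1 + e + e ^ 2 + e ^ 3 + e ^ 4) = 0 := by
      linear_combination he5
    rcases mul_eq_zero.mp h with h | h
    · exact absurd (sub_eq_zero.mp h) he1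
    · exact h
  have he0 : e ≠ 0 := Complex.exp_ne_zero _
  have hne : (1 : ℂ) + e ≠ 0 := by
    intro h
    have : e.im = 0 := by
      have : e = -1 := by linear_combination h
      rw [this]; simp
    rw [him] at this; linarith
  refine ⟨?_, ?_, ?_, ?_⟩
  · decide
  · ext i j
    fin_cases i <;> fin_cases j <;> rfl
  · constructor
    · ext i j
      fin_cases i <;> fin_cases j <;>
        simp [Matrix.conjTranspose_apply, B₃]
    · intro x hx
      have hx2 : 0 < x 0 ^ 2 + x 1 ^ 2 := by
        rcases (by
          by_contra h
          push_neg at h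
          exact hx (Finsupp.ext fun i => by fin_cases i <;> [exact h.1; exact h.2]) : x 0 ≠ 0 ∨ x 1 ≠ 0) with h | h
        · positivity
        · positivity
      have hN : (1 + Real.cos (2*Real.pi/5))^2 + Real.sin (2*Real.pi/5)^2 > 1 := by
        nlinarith [hs, hc]
      have habs : ‖e‖ = 1 := by rw [hee]; exact Complex.norm_exp_ofReal_mul_I _
      have hnsq : Complex.normSq e = 1 := by
        rw [← Complex.sq_norm, habs]; norm_num
      have he4 : e ^ 4 = starRingEnd ℂ e := by
        have h1 : e ^ 4 * e = starRingEnd ℂ e * e := by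
          rw [mul_comm (starRingEnd ℂ e) e, Complex.mul_conj, hnsq]
          push_cast
          linear_combination he5
        exact mul_right_cancel₀ he0 h1
      have hb : (e / (1 + e)).im
          = Real.sin (2*Real.pi/5) / ((1 + Real.cos (2*Real.pi/5))^2 + Real.sin (2*Real.pi/5)^2) := by
        rw [Complex.div_im, Complex.normSq_apply]
        simp [Complex.add_re, Complex.add_im, hre, him]
        field_simp
        ring
      have hd : (1 - e ^ 4).im = Real.sin (2*Real.pi/5) := by
        rw [Complex.sub_im, he4, Complex.conj_im, him]; simp
      set s := Real.sin (2*Real.pi/5) with hsdef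
      set N := (1 + Real.cos (2*Real.pi/5))^2 + s^2 with hNdef
      have hb0 : 0 < s / N := div_pos hs (by linarith)
      have hbs : s / N < s := div_lt_self hs hN
      simp only [dotProduct, Matrix.mulVec, Fin.sum_univ_two, Matrix.of_apply,
        Pi.star_apply, star_trivial, Matrix.cons_val_zero, Matrix.cons_val_one,
        Matrix.head_cons, Matrix.head_fin_const]
      simp only [Finsupp.sum_fintype, zero_mul, mul_zero, add_zero, Finset.sum_const_zero, implies_true,
        Fin.sum_univ_two]
      show 0 < x 0 * (B₃ 0 0).im * x 0 + x 0 * (B₃ 0 1).im * x 1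
          + (x 1 * (B₃ 1 0).im * x 0 + x 1 * (B₃ 1 1).im * x 1)
      have e00 : (B₃ 0 0).im = s := by simp [B₃, him]
      have e01 : (B₃ 0 1).im = s / N := by simp only [B₃]; rw [show (!![e, e / (1 + e); e / (1 + e), 1 - e ^ 4] : Matrix (Fin 2) (Fin 2) ℂ) 0 1 = e / (1+e) from rfl, hb]
      have e10 : (B₃ 1 0).im = s / N := by simp only [B₃]; rw [show (!![e, e / (1 + e); e / (1 + e), 1 - e ^ 4] : Matrix (Fin 2) (Fin 2) ℂ) 1 0 = e / (1+e) from rfl, hb]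
      have e11 : (B₃ 1 1).im = s := by simp only [B₃]; rw [show (!![e, e / (1 + e); e / (1 + e), 1 - e ^ 4] : Matrix (Fin 2) (Fin 2) ℂ) 1 1 = 1 - e ^ 4 from rfl, hd]
      rw [e00, e01, e10, e11]
      nlinarith [sq_nonneg (x 0 + x 1), mul_nonneg hb0.le (sq_nonneg (x 0 + x 1)),
        mul_pos (sub_pos.mpr hbs) hx2]
  · have hM : C * B₃ + D = !![(0:ℂ), 1; -e, -(e/(1+e))] := by
      ext i j
      fin_cases i <;> fin_cases j <;>
        simp [Matrix.mul_apply, Fin.sum_univ_two, B₃, C, D]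
    have hdet : (C * B₃ + D).det = e := by
      rw [hM, Matrix.det_fin_two_of]
      ring
    have hu : IsUnit (C * B₃ + D).det := hdet ▸ isUnit_iff_ne_zero.mpr he0
    haveI := (C * B₃ + D).invertibleOfIsUnitDet hu
    rw [Matrix.mul_inv_eq_iff_eq_mul_of_invertible]
    ext i j
    fin_cases i <;> fin_cases j <;>
      · simp only [Matrix.mul_apply, Matrix.add_apply, Fin.sum_univ_two, A, B, C, D, B₃,
          Matrix.cons_val', Matrix.cons_val_zero, Matrix.cons_val_one, Matrix.head_cons,
          Matrix.head_fin_const, Matrix.empty_val', Matrix.cons_val_fin_one, Matrix.of_apply,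
          Fin.zero_eta, Fin.mk_one]
        field_simp
        first
          | linear_combination (0:ℂ) * hcyc
          | linear_combination (1 - 2*e^2 - e^3) * hcyc
          | linear_combination (1 - e) * hcyc
          | linear_combination (-2 - e) * he5 - hcyc
          | linear_combination (-1 - 2*e - e^2) * he5
          | linear_combination (-1 - e) * he5
end
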